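/- Let g : ℝ × E → 𝔸 be twice continuously differentiable with g(t,x) a unit of 𝔸 for every (t,x). Then for every (t,x) ∈ ℝ × E and every v ∈ E, the time derivative at t of the function τ ↦ g(τ,x)⁻¹ · (∂_v g)(τ,x) equals g(t,x)⁻¹ · ∂_v( y ↦ (∂_t g)(t,y) · g(t,y)⁻¹ )(x) · g(t,x). (This is identity (st3) of Lemma 9.4: in the paper's notation, (g⁻¹ dg)′ = g⁻¹ (d(g′g⁻¹)) g, the key identity of the Donaldson–Sadun gauge-transformation method.) -/

import Mathlib

/-- Identity (st3) of Lemma 9.4 (Donaldson–Sadun): for a smooth unit-valued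
`g : ℝ × E → 𝔸`, the time derivative of `τ ↦ g(τ,x)⁻¹ ∂_v g(τ,x)` at `t` equals
`g(t,x)⁻¹ · ∂_v(y ↦ ∂_t g(t,y) · g(t,y)⁻¹)(x) · g(t,x)`. -/
theorem stmt_9 {E : Type*} [NormedAddCommGroup E] [NormedSpace ℝ E]
    {𝔸 : Type*} [NormedRing 𝔸] [NormedAlgebra ℝ 𝔸] [CompleteSpace 𝔸]
    (g : ℝ × E → 𝔸) (hg : ContDiff ℝ 2 g) (hunit : ∀ p : ℝ × E, IsUnit (g p))
    (t : ℝ) (x : E) (v : E) :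
    HasDerivAt
      (fun τ : ℝ => Ring.inverse (g (τ, x)) * fderiv ℝ (fun y => g (τ, y)) x v)
      (Ring.inverse (g (t, x)) *
        fderiv ℝ (fun y => deriv (fun τ => g (τ, y)) t * Ring.inverse (g (t, y))) x v
        * g (t, x)) t := by
  have hgd : Differentiable ℝ g := hg.differentiable (by norm_num)
  have hD : ContDiff ℝ 1 (fderiv ℝ g) := hg.fderiv_right (by norm_num)
  -- time sections
  have ht : ∀ (τ : ℝ) (y : E), HasDerivAt (fun τ => g (τ, y))
      (fderiv ℝ g (τ, y) (1, 0)) τ := fun τ y =>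
    (hgd (τ, y)).hasFDerivAt.comp_hasDerivAt τ
      (HasDerivAt.prodMk (hasDerivAt_id τ) (hasDerivAt_const τ y))
  -- spatial inclusion
  have hι : ∀ (τ : ℝ) (y : E), HasFDerivAt (fun y : E => (τ, y))
      (((0 : E →L[ℝ] ℝ)).prod (ContinuousLinearMap.id ℝ E)) y := fun τ y =>
    HasFDerivAt.prodMk (hasFDerivAt_const τ y) (hasFDerivAt_id y)
  have hsp : ∀ (τ : ℝ) (y : E), HasFDerivAt (fun y : E => g (τ, y))
      ((fderiv ℝ g (τ, y)).comp (((0 : E →L[ℝ] ℝ)).prod (ContinuousLinearMap.id ℝ E))) y :=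
    fun τ y => (hgd (τ, y)).hasFDerivAt.comp y (hι τ y)
  have hsp_eq : ∀ τ : ℝ, fderiv ℝ (fun y => g (τ, y)) x v = fderiv ℝ g (τ, x) (0, v) := by
    intro τ
    rw [(hsp τ x).fderiv]
    rfl
  set i := Ring.inverse (g (t, x)) with hi
  obtain ⟨U, hU⟩ := hunit (t, x)
  have hUinv : (↑U⁻¹ : 𝔸) = i := by rw [hi, ← hU, Ring.inverse_unit]
  have h1 : i * g (t, x) = 1 := Ring.inverse_mul_cancel _ (hunit _)
  -- derivative of the inversion at g (t, x)
  have hinv0 : HasFDerivAt Ring.inverse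
      (-ContinuousLinearMap.mulLeftRight ℝ 𝔸 i i) (g (t, x)) := by
    have := hasFDerivAt_ringInverse (𝕜 := ℝ) U
    rwa [hUinv, hU] at this
  -- derivative of τ ↦ inverse (g (τ, x))
  have hinvD : HasDerivAt (fun τ => Ring.inverse (g (τ, x)))
      (-(i * fderiv ℝ g (t, x) (1, 0) * i)) t := by
    have := hinv0.comp_hasDerivAt t (ht t x)
    exact this
  -- derivative of τ ↦ fderiv ℝ g (τ, x) (0, v)
  have hDd : DifferentiableAt ℝ (fderiv ℝ g) (t, x) := (hD.differentiable (by norm_num)) _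
  have hBD : HasDerivAt (fun τ => fderiv ℝ g (τ, x))
      (fderiv ℝ (fderiv ℝ g) (t, x) (1, 0)) t :=
    hDd.hasFDerivAt.comp_hasDerivAt t (HasDerivAt.prodMk (hasDerivAt_id t) (hasDerivAt_const t x))
  have hB : HasDerivAt (fun τ => fderiv ℝ g (τ, x) (0, v))
      (fderiv ℝ (fderiv ℝ g) (t, x) (1, 0) (0, v)) t := by
    simpa using hBD.clm_apply (hasDerivAt_const t ((0 : ℝ), v))
  -- the left-hand side
  have hL : HasDerivAt
      (fun τ : ℝ => Ring.inverse (g (τ, x)) * fderiv ℝ (fun y => g (τ, y)) x v)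
      (-(i * fderiv ℝ g (t, x) (1, 0) * i) * fderiv ℝ g (t, x) (0, v)
        + i * fderiv ℝ (fderiv ℝ g) (t, x) (1, 0) (0, v)) t := by
    have := hinvD.mul hB
    have hfun : (fun τ : ℝ => Ring.inverse (g (τ, x)) * fderiv ℝ (fun y => g (τ, y)) x v)
        = fun τ => Ring.inverse (g (τ, x)) * fderiv ℝ g (τ, x) (0, v) :=
      funext fun τ => by rw [hsp_eq]
    rw [hfun]
    exact this
  -- compute the right-hand side value
  -- the spatial function
  have hc : HasFDerivAt (fun y : E => fderiv ℝ g (t, y) (1, 0))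
      (((fderiv ℝ (fderiv ℝ g) (t, x)).comp
          (((0 : E →L[ℝ] ℝ)).prod (ContinuousLinearMap.id ℝ E))).flip ((1 : ℝ), (0 : E))) x := by
    have h0 : HasFDerivAt (fun y : E => fderiv ℝ g (t, y))
        ((fderiv ℝ (fderiv ℝ g) (t, x)).comp
          (((0 : E →L[ℝ] ℝ)).prod (ContinuousLinearMap.id ℝ E))) x :=
      hDd.hasFDerivAt.comp x (hι t x)
    simpa using h0.clm_apply (hasFDerivAt_const ((1 : ℝ), (0 : E)) x)
  have hd : HasFDerivAt (fun y : E => Ring.inverse (g (t, y)))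
      ((-ContinuousLinearMap.mulLeftRight ℝ 𝔸 i i).comp
        ((fderiv ℝ g (t, x)).comp (((0 : E →L[ℝ] ℝ)).prod (ContinuousLinearMap.id ℝ E)))) x := by
    have := hinv0.comp x (hsp t x)
    exact this
  have hF : HasFDerivAt (fun y : E => fderiv ℝ g (t, y) (1, 0) * Ring.inverse (g (t, y))) _ x :=
    hc.mul' hd
  have hFval : fderiv ℝ (fun y => deriv (fun τ => g (τ, y)) t * Ring.inverse (g (t, y))) x v
      = fderiv ℝ g (t, x) (1, 0) * (-(i * fderiv ℝ g (t, x) (0, v) * i))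
        + fderiv ℝ (fderiv ℝ g) (t, x) (0, v) (1, 0) * i := by
    have hfun : (fun y : E => deriv (fun τ => g (τ, y)) t * Ring.inverse (g (t, y)))
        = fun y : E => fderiv ℝ g (t, y) (1, 0) * Ring.inverse (g (t, y)) :=
      funext fun y => by rw [(ht t y).deriv]
    rw [hfun, hF.fderiv]
    simp [smul_eq_mul, mul_assoc]
    rfl
  -- symmetry of second derivatives
  have hsym : fderiv ℝ (fderiv ℝ g) (t, x) ((1 : ℝ), (0 : E)) ((0 : ℝ), v)
      = fderiv ℝ (fderiv ℝ g) (t, x) ((0 : ℝ), v) ((1 : ℝ), (0 : E)) :=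
    (hg.contDiffAt.isSymmSndFDerivAt (by norm_num)) _ _
  -- put everything together
  convert hL using 1
  rw [hFval, hsym]
  have expand : i * (fderiv ℝ g (t, x) (1, 0) * (-(i * fderiv ℝ g (t, x) (0, v) * i))
        + fderiv ℝ (fderiv ℝ g) (t, x) (0, v) (1, 0) * i) * g (t, x)
      = -(i * (fderiv ℝ g (t, x) (1, 0) * (i * (fderiv ℝ g (t, x) (0, v) * (i * g (t, x))))))
        + i * (fderiv ℝ (fderiv ℝ g) (t, x) (0, v) (1, 0) * (i * g (t, x))) := by
    ring_nf
    simp [mul_add, add_mul, mul_assoc]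
  rw [expand, h1]
  simp [mul_assoc]
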